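/- Let A be a perfect k-algebra that is finitely generated as a k-algebra, and let S be a commutative associative unital k-algebra. Then the map ψ : C(A)⊗S → C(A⊗S), determined by ψ(γ⊗s) = γ⊗L_s, is an isomorphism of associative algebras. -/

import Mathlib

open TensorProduct

set_option synthInstance.maxHeartbeats 1000000
set_option maxHeartbeats 2000000

noncomputable section
attribute [local instance] Classical.decEq

/-- The set of derivations of a (possibly non-associative, non-unital) `k`-algebra `B`,
as a submodule of `Module.End k B`. -/
def Derivations (k B : Type) [Field k] [NonUnitalNonAssocSemiring B] [Module k B]
    [SMulCommClass k B B] [IsScalarTower k B B] :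
    Submodule k (Module.End k B) where
  carrier := {d | ∀ x y : B, d (x * y) = d x * y + x * d y}
  add_mem' := by
    intro f g hf hg x y
    simp only [LinearMap.add_apply, hf x y, hg x y, add_mul, mul_add]
    abel
  zero_mem' := by intro x y; simp
  smul_mem' := by
    intro c f hf x y
    simp only [LinearMap.smul_apply, hf x y, smul_add, smul_mul_assoc, mul_smul_comm]

/-- The centroid of a (possibly non-associative, non-unital) `k`-algebra `B`, as a
subalgebra of `Module.End k B`. -/
def centroid (k B : Type) [Field k] [NonUnitalNonAssocSemiring B] [Module k B]
    [SMulCommClass k B B] [IsScalarTower k B B] :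
    Subalgebra k (Module.End k B) where
  carrier := {γ | ∀ x y : B, γ (x * y) = γ x * y ∧ γ (x * y) = x * γ y}
  mul_mem' := by
    intro γ δ hγ hδ x y
    constructor
    · show γ (δ (x * y)) = γ (δ x) * y
      rw [(hδ x y).1, (hγ (δ x) y).1]
    · show γ (δ (x * y)) = x * γ (δ y)
      rw [(hδ x y).2, (hγ x (δ y)).2]
  one_mem' := by intro x y; exact ⟨rfl, rfl⟩
  add_mem' := by
    intro γ δ hγ hδ x y
    constructor
    · simp [LinearMap.add_apply, (hγ x y).1, (hδ x y).1, add_mul]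
    · simp [LinearMap.add_apply, (hγ x y).2, (hδ x y).2, mul_add]
  zero_mem' := by intro x y; simp
  algebraMap_mem' := by
    intro c x y
    constructor
    · simp [Module.algebraMap_end_apply, smul_mul_assoc]
    · simp [Module.algebraMap_end_apply, mul_smul_comm]

/-- A `k`-algebra is perfect if it is spanned by products. -/
def IsPerfectAlg (k B : Type) [Field k] [NonUnitalNonAssocSemiring B] [Module k B] : Prop :=
  Submodule.span k {z : B | ∃ x y : B, x * y = z} = ⊤

/-- The natural map `ψ : C(A) ⊗ S → End(A ⊗ S)`, `γ ⊗ s ↦ γ ⊗ L_s`. -/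
def psi (k A S : Type) [Field k] [NonUnitalNonAssocRing A] [Module k A]
    [SMulCommClass k A A] [IsScalarTower k A A] [CommRing S] [Algebra k S] :
    (↥(centroid k A) ⊗[k] S) →ₗ[k] Module.End k (A ⊗[k] S) :=
  (TensorProduct.homTensorHomMap (RingHom.id k) A S A S).comp
    (TensorProduct.map (centroid k A).val.toLinearMap (LinearMap.mul k S))
/-- `B` is finitely generated as a module over a set `Γ` of `k`-linear endomorphisms
(e.g. over its centroid or differential centroid). -/
def FGOverSet (k B : Type) [Field k] [AddCommMonoid B] [Module k B]
    (Γ : Set (Module.End k B)) : Prop :=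
  ∃ (n : ℕ) (a : Fin n → B), ∀ x : B, ∃ γ : Fin n → Module.End k B,
    (∀ i, γ i ∈ Γ) ∧ x = ∑ i, γ i (a i)

section Aux

variable {k A S : Type} [Field k] [NonUnitalNonAssocRing A] [Module k A]
    [SMulCommClass k A A] [IsScalarTower k A A] [CommRing S] [Algebra k S]

lemma mem_centroid_iff {B : Type} [NonUnitalNonAssocSemiring B] [Module k B]
    [SMulCommClass k B B] [IsScalarTower k B B] (γ : Module.End k B) :
    γ ∈ centroid k B ↔ ∀ x y : B, γ (x * y) = γ x * y ∧ γ (x * y) = x * γ y := Iff.rfl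

lemma psi_tmul (γ : ↥(centroid k A)) (s : S) :
    psi k A S (γ ⊗ₜ[k] s) =
      TensorProduct.map (γ : Module.End k A) (LinearMap.mul k S s) := by
  simp [psi]

def fE (k : Type) (M S : Type) [Field k] [AddCommGroup M] [Module k M] [CommRing S]
    [Algebra k S] : M ⊗[k] S ≃ₗ[k] (Module.Basis.ofVectorSpaceIndex k S →₀ M) :=
  (TensorProduct.congr (LinearEquiv.refl k M) (Module.Basis.ofVectorSpace k S).repr).trans
    (TensorProduct.finsuppScalarRight k k M _)

lemma fE_tmul {M : Type} [AddCommGroup M] [Module k M] (a : M) (s : S)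
    (j : Module.Basis.ofVectorSpaceIndex k S) :
    fE k M S (a ⊗ₜ[k] s) j = (Module.Basis.ofVectorSpace k S).repr s j • a := by
  simp [fE]

lemma fE_symm_single {M : Type} [AddCommGroup M] [Module k M]
    (j : Module.Basis.ofVectorSpaceIndex k S) (a : M) :
    (fE k M S).symm (Finsupp.single j a) = a ⊗ₜ[k] Module.Basis.ofVectorSpace k S j := by
  simp [fE, TensorProduct.congr_symm_tmul]

lemma fE_symm_eq_sum {M : Type} [AddCommGroup M] [Module k M]
    (l : Module.Basis.ofVectorSpaceIndex k S →₀ M) :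
    (fE k M S).symm l = l.sum fun j a => a ⊗ₜ[k] Module.Basis.ofVectorSpace k S j := by
  conv_lhs => rw [← Finsupp.sum_single l, map_finsuppSum]
  exact Finsupp.sum_congr fun j _ => fE_symm_single j (l j)

lemma fE_mul_right (z : A ⊗[k] S) (y : A) (j : Module.Basis.ofVectorSpaceIndex k S) :
    fE k A S (z * (y ⊗ₜ[k] (1 : S))) j = fE k A S z j * y := by
  induction z using TensorProduct.induction_on with
  | zero => simp
  | tmul a s => rw [Algebra.TensorProduct.tmul_mul_tmul, mul_one, fE_tmul, fE_tmul,
      smul_mul_assoc]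
  | add z w hz hw => rw [add_mul, map_add, Finsupp.add_apply, hz, hw, map_add,
      Finsupp.add_apply, add_mul]

lemma fE_mul_left (z : A ⊗[k] S) (y : A) (j : Module.Basis.ofVectorSpaceIndex k S) :
    fE k A S ((y ⊗ₜ[k] (1 : S)) * z) j = y * fE k A S z j := by
  induction z using TensorProduct.induction_on with
  | zero => simp
  | tmul a s => rw [Algebra.TensorProduct.tmul_mul_tmul, one_mul, fE_tmul, fE_tmul,
      mul_smul_comm]
  | add z w hz hw => rw [mul_add, map_add, Finsupp.add_apply, hz, hw, map_add,
      Finsupp.add_apply, mul_add]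

-- injectivity key
lemma psi_coeff (x : ↥(centroid k A) ⊗[k] S) (a : A) (j : Module.Basis.ofVectorSpaceIndex k S) :
    fE k A S (psi k A S x (a ⊗ₜ[k] (1 : S))) j
      = ((fE k (↥(centroid k A)) S x j : Module.End k A)) a := by
  induction x using TensorProduct.induction_on with
  | zero => simp
  | tmul γ s =>
      rw [psi_tmul, TensorProduct.map_tmul, fE_tmul, fE_tmul]
      simp [LinearMap.mul_apply', mul_one]
  | add x y hx hy =>
      rw [map_add, map_add, LinearMap.add_apply, map_add, Finsupp.add_apply, hx, hy,
        Finsupp.add_apply]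
      rfl

lemma psi_injective : Function.Injective (psi k A S) := by
  rw [injective_iff_map_eq_zero]
  intro x hx
  have h : fE k (↥(centroid k A)) S x = 0 := by
    ext j a
    have := psi_coeff (k := k) (A := A) (S := S) x a j
    rw [hx] at this
    simpa using this.symm
  simpa using congrArg (fE k (↥(centroid k A)) S).symm h

lemma psi_mul (x y : ↥(centroid k A) ⊗[k] S) :
    psi k A S (x * y) = psi k A S x * psi k A S y := by
  induction x using TensorProduct.induction_on with
  | zero => simp [zero_mul]
  | add x₁ x₂ h₁ h₂ => simp only [add_mul, map_add, h₁, h₂]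
  | tmul γ s =>
    induction y using TensorProduct.induction_on with
    | zero => simp [mul_zero]
    | add y₁ y₂ h₁ h₂ => simp only [mul_add, map_add, h₁, h₂]
    | tmul δ t =>
      rw [Algebra.TensorProduct.tmul_mul_tmul, psi_tmul, psi_tmul, psi_tmul]
      apply TensorProduct.ext'
      intro a u
      simp only [Module.End.mul_apply, TensorProduct.map_tmul, LinearMap.mul_apply',
        MulMemClass.coe_mul, mul_assoc]

lemma psi_one : psi k A S 1 = 1 := by
  rw [Algebra.TensorProduct.one_def, psi_tmul]
  apply TensorProduct.ext'
  intro a u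
  simp [LinearMap.mul_apply']

lemma psi_mem_centroid (x : ↥(centroid k A) ⊗[k] S) :
    psi k A S x ∈ centroid k (A ⊗[k] S) := by
  induction x using TensorProduct.induction_on with
  | zero => rw [map_zero]; exact zero_mem _
  | add x y hx hy => rw [map_add]; exact add_mem hx hy
  | tmul γ s =>
    rw [psi_tmul]
    intro z w
    constructor
    · induction z using TensorProduct.induction_on with
      | zero => simp [zero_mul]
      | add z₁ z₂ h₁ h₂ => simp only [add_mul, map_add, h₁, h₂]
      | tmul a s' =>
        induction w using TensorProduct.induction_on with
        | zero => simp [mul_zero]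
        | add w₁ w₂ h₁ h₂ => simp only [mul_add, map_add, h₁, h₂]
        | tmul a' t' =>
          rw [Algebra.TensorProduct.tmul_mul_tmul, TensorProduct.map_tmul,
            TensorProduct.map_tmul, Algebra.TensorProduct.tmul_mul_tmul,
            (γ.2 a a').1]
          simp only [LinearMap.mul_apply']
          ring_nf
    · induction z using TensorProduct.induction_on with
      | zero => simp [zero_mul]
      | add z₁ z₂ h₁ h₂ => simp only [add_mul, map_add, h₁, h₂]
      | tmul a s' =>
        induction w using TensorProduct.induction_on with
        | zero => simp [mul_zero]
        | add w₁ w₂ h₁ h₂ => simp only [mul_add, map_add, h₁, h₂]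
        | tmul a' t' =>
          rw [Algebra.TensorProduct.tmul_mul_tmul, TensorProduct.map_tmul,
            TensorProduct.map_tmul, Algebra.TensorProduct.tmul_mul_tmul,
            (γ.2 a a').2]
          simp only [LinearMap.mul_apply']
          ring_nf


lemma centroid_le_range (hA : IsPerfectAlg k A)
    (hfg : ∃ s : Finset A, NonUnitalAlgebra.adjoin k (↑s : Set A) = ⊤)
    (T : Module.End k (A ⊗[k] S)) (hT : T ∈ centroid k (A ⊗[k] S)) :
    T ∈ LinearMap.range (psi k A S) := by
  classical
  obtain ⟨gens, hgens⟩ := hfg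
  set b := Module.Basis.ofVectorSpace k S with hb
  let ρ : A →ₗ[k] A ⊗[k] S := (TensorProduct.mk k A S).flip 1
  let Tc : A →ₗ[k] (Module.Basis.ofVectorSpaceIndex k S →₀ A) := (fE k A S).toLinearMap ∘ₗ T ∘ₗ ρ
  let Tj : Module.Basis.ofVectorSpaceIndex k S → Module.End k A :=
    fun j => (Finsupp.lapply j).comp Tc
  have hTj : ∀ j (x : A), Tj j x = fE k A S (T (x ⊗ₜ[k] (1 : S))) j := fun j x => rfl
  have hTones : ∀ x y : A,
      (x * y) ⊗ₜ[k] (1 : S) = (x ⊗ₜ[k] (1 : S)) * (y ⊗ₜ[k] (1 : S)) := by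
    intro x y; rw [Algebra.TensorProduct.tmul_mul_tmul, mul_one]
  have hcent : ∀ j, Tj j ∈ centroid k A := by
    intro j x y
    constructor
    · rw [hTj, hTj, hTones, (hT _ _).1, fE_mul_right]
    · rw [hTj, hTj, hTones, (hT _ _).2, fE_mul_left]
  let J : Finset (Module.Basis.ofVectorSpaceIndex k S) := gens.sup fun a => (Tc a).support
  have hJ0 : ∀ j, j ∉ J → Tj j = 0 := by
    intro j hj
    have hall : ∀ x, x ∈ NonUnitalAlgebra.adjoin k (↑gens : Set A) → Tj j x = 0 := by
      intro x hx
      induction hx using NonUnitalAlgebra.adjoin_induction with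
      | mem a ha =>
          show Tc a j = 0
          have hsub : (Tc a).support ⊆ J :=
            Finset.le_sup (f := fun a => (Tc a).support) ha
          by_contra h
          exact hj (hsub (Finsupp.mem_support_iff.2 h))
      | add x y hx hy ihx ihy => rw [map_add, ihx, ihy, add_zero]
      | zero => rw [map_zero]
      | mul x y hx hy ihx ihy => rw [(hcent j x y).1, ihx, zero_mul]
      | smul r x hx ih => rw [map_smul, ih, smul_zero]
    ext x
    rw [LinearMap.zero_apply]
    exact hall x (by rw [hgens]; exact NonUnitalAlgebra.mem_top)
  refine ⟨∑ j ∈ J, (⟨Tj j, hcent j⟩ : ↥(centroid k A)) ⊗ₜ[k] (b j : S), ?_⟩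
  set c : ↥(centroid k A) ⊗[k] S :=
    ∑ j ∈ J, (⟨Tj j, hcent j⟩ : ↥(centroid k A)) ⊗ₜ[k] (b j : S) with hc
  have key : ∀ (x y : A) (s : S),
      psi k A S c ((x * y) ⊗ₜ[k] s) = T ((x * y) ⊗ₜ[k] s) := by
    intro x y s
    have hL : psi k A S c ((x * y) ⊗ₜ[k] s)
        = ∑ j ∈ J, Tj j (x * y) ⊗ₜ[k] ((b j : S) * s) := by
      rw [hc, map_sum, LinearMap.sum_apply]
      refine Finset.sum_congr rfl fun j _ => ?_
      rw [psi_tmul, TensorProduct.map_tmul]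
      rfl
    have hsplit : (x * y) ⊗ₜ[k] s = (x ⊗ₜ[k] (1 : S)) * (y ⊗ₜ[k] s) := by
      rw [Algebra.TensorProduct.tmul_mul_tmul, one_mul]
    have hTx : T (x ⊗ₜ[k] (1 : S)) = (Tc x).sum fun j a => a ⊗ₜ[k] (b j : S) := by
      calc T (x ⊗ₜ[k] (1 : S))
          = (fE k A S).symm (fE k A S (T (x ⊗ₜ[k] (1 : S)))) := by
            rw [LinearEquiv.symm_apply_apply]
        _ = (fE k A S).symm (Tc x) := rfl
        _ = _ := fE_symm_eq_sum _
    have hsupp : (Tc x).support ⊆ J := by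
      intro j hj
      by_contra hjJ
      refine Finsupp.mem_support_iff.1 hj ?_
      show Tj j x = 0
      rw [hJ0 j hjJ]; rfl
    rw [hL, hsplit, (hT _ _).1, hTx, Finsupp.sum, Finset.sum_mul,
      Finset.sum_subset hsupp ?_]
    · refine Finset.sum_congr rfl fun j _ => ?_
      rw [Algebra.TensorProduct.tmul_mul_tmul]
      congr 1
      show Tj j (x * y) = Tj j x * y
      exact (hcent j x y).1
    · intro j _ hjn
      rw [Finsupp.notMem_support_iff.1 hjn, TensorProduct.zero_tmul, zero_mul]
  have key2 : ∀ (a : A) (s : S), psi k A S c (a ⊗ₜ[k] s) = T (a ⊗ₜ[k] s) := by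
    intro a s
    have ha : a ∈ Submodule.span k {z : A | ∃ x y : A, x * y = z} := by
      rw [hA]; exact Submodule.mem_top
    induction ha using Submodule.span_induction with
    | mem z hz => obtain ⟨x, y, rfl⟩ := hz; exact key x y s
    | zero => rw [TensorProduct.zero_tmul, map_zero, map_zero]
    | add x y _ _ ihx ihy =>
        rw [TensorProduct.add_tmul, map_add, map_add, ihx, ihy]
    | smul r x _ ih =>
        rw [← TensorProduct.smul_tmul', map_smul, map_smul, ih]
  exact TensorProduct.ext' key2
end Aux

/-- Lemma 1.1(ii): if `A` is perfect and finitely generated as a `k`-algebra and `S` is a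
commutative associative unital algebra, then `ψ : C(A) ⊗ S → C(A ⊗ S)` is an isomorphism of
associative algebras. -/
theorem psi_isomorphism_of_perfect_of_finitelyGenerated
    (k A S : Type) [Field k] [NonUnitalNonAssocRing A] [Module k A]
    [SMulCommClass k A A] [IsScalarTower k A A] [CommRing S] [Algebra k S]
    (hA : IsPerfectAlg k A)
    (hfg : ∃ s : Finset A, NonUnitalAlgebra.adjoin k (↑s : Set A) = ⊤) :
    Function.Injective (psi k A S) ∧
      (∀ x y : ↥(centroid k A) ⊗[k] S, psi k A S (x * y) = psi k A S x * psi k A S y) ∧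
      psi k A S 1 = 1 ∧
      (∀ T : Module.End k (A ⊗[k] S),
        T ∈ LinearMap.range (psi k A S) ↔ T ∈ centroid k (A ⊗[k] S)) := by
  refine ⟨psi_injective, psi_mul, psi_one, fun T => ⟨?_, centroid_le_range hA hfg T⟩⟩
  rintro ⟨x, rfl⟩
  exact psi_mem_centroid x

end
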